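/- Fix an unordered pair {a, b} of distinct colors and let v be one of the six varieties having {a, b} as an opposite pair. Then v shares no corner triples with its mirror variety v* (which is also one of the six); v shares exactly two corner triples with each of the other four varieties among the six; and the four two-element sets of corner triples so shared are pairwise disjoint. -/

import Mathlib

set_option maxRecDepth 40000
set_option maxHeartbeats 1000000


open scoped Classical

/-- A colored cube: a bijection assigning to each face (`Fin 6`) a color (`Fin 6`). -/
abbrev CCube := Equiv.Perm (Fin 6)

/-- The opposite-face involution: face `i` is opposite face `i + 3`. -/
def tau (i : Fin 6) : Fin 6 := i + 3

/-- Quarter-turn rotation about the axis through the face pair `{2, 5}`. -/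
def r1 : Equiv.Perm (Fin 6) := ([0, 1, 3, 4] : List (Fin 6)).formPerm

/-- Quarter-turn rotation about the axis through the face pair `{0, 3}`. -/
def r2 : Equiv.Perm (Fin 6) := ([1, 2, 4, 5] : List (Fin 6)).formPerm

/-- The rotation group of the cube, acting on the set of faces. -/
def G : Subgroup (Equiv.Perm (Fin 6)) := Subgroup.closure {r1, r2}

/-- Two colored cubes have the same variety iff one is obtained from the other by
precomposition with a rotation. -/
def sameVariety (c d : CCube) : Prop := ∃ g ∈ G, d = c * g

def varietySetoid : Setoid CCube where
  r := sameVariety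
  iseqv := by
    refine ⟨fun c => ⟨1, G.one_mem, (mul_one c).symm⟩, ?_, ?_⟩
    · rintro c d ⟨g, hg, rfl⟩
      exact ⟨g⁻¹, G.inv_mem hg, by group⟩
    · rintro a b c ⟨g, hg, rfl⟩ ⟨h, hh, rfl⟩
      exact ⟨g * h, G.mul_mem hg hh, by group⟩

/-- A variety is a `G`-orbit of colored cubes. -/
def Variety := Quotient varietySetoid

/-- The variety of a colored cube. -/
def varietyOf (c : CCube) : Variety := Quotient.mk varietySetoid c

/-- The three opposite pairs of colors of a colored cube. -/
def oppPairs (c : CCube) : Finset (Finset (Fin 6)) :=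
  Finset.image (fun i => ({c i, c (tau i)} : Finset (Fin 6))) Finset.univ

/-- The twelve adjacent pairs of colors of a colored cube. -/
def adjPairs (c : CCube) : Finset (Finset (Fin 6)) :=
  Finset.image (fun p : Fin 6 × Fin 6 => ({c p.1, c p.2} : Finset (Fin 6)))
    (Finset.univ.filter (fun p : Fin 6 × Fin 6 => p.2 ≠ p.1 ∧ p.2 ≠ tau p.1))

/-- The mirror cube of `c`. -/
def mirror (c : CCube) : CCube := c * Equiv.swap 0 3

/-- Cyclic rotation of an ordered triple. -/
def cyc (t : Fin 6 × Fin 6 × Fin 6) : Fin 6 × Fin 6 × Fin 6 := (t.2.1, t.2.2, t.1)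

/-- The cyclic equivalence class of an ordered triple. -/
def cycClass (t : Fin 6 × Fin 6 × Fin 6) : Finset (Fin 6 × Fin 6 × Fin 6) :=
  {t, cyc t, cyc (cyc t)}

/-- The eight corner triples of a colored cube: faces `0, 1, 2` meet at a corner, read
clockwise, and the corners of the cube are the images of this corner under rotations. -/
noncomputable def cornerTriples (c : CCube) : Finset (Finset (Fin 6 × Fin 6 × Fin 6)) :=
  Finset.univ.filter (fun s => ∃ g ∈ G, s = cycClass (c (g 0), c (g 1), c (g 2)))

/-- The opposite pairs of a variety. -/
noncomputable def vOpp (v : Variety) : Finset (Finset (Fin 6)) := oppPairs (Quotient.out v)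

/-- The adjacent pairs of a variety. -/
noncomputable def vAdj (v : Variety) : Finset (Finset (Fin 6)) := adjPairs (Quotient.out v)

/-- The corner triples of a variety. -/
noncomputable def vCorners (v : Variety) : Finset (Finset (Fin 6 × Fin 6 × Fin 6)) :=
  cornerTriples (Quotient.out v)

/-- The mirror variety of a variety. -/
noncomputable def vMirror (v : Variety) : Variety := varietyOf (mirror (Quotient.out v))

/-- A pentad: five varieties which pairwise share no corner triples and whose fifteen
opposite pairs comprise each unordered pair of colors exactly once. -/
def IsPentad (P : Finset Variety) : Prop :=
  P.card = 5 ∧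
  (∀ v ∈ P, ∀ w ∈ P, v ≠ w → vCorners v ∩ vCorners w = ∅) ∧
  (∀ p : Finset (Fin 6), p.card = 2 → ∃! v, v ∈ P ∧ p ∈ vOpp v)

/-- A corner solution from the multiset `S` modeled on the cube `m`: eight distinct cube
instances from `S` in bijection with the eight corner triples of `m`, each chosen cube having
its assigned corner triple among its own corner triples. -/
def CornerSolutionOn (S : Multiset CCube) (m : CCube) : Prop :=
  ∃ ψ : Finset (Fin 6 × Fin 6 × Fin 6) → CCube,
    Multiset.map ψ (cornerTriples m).val ≤ S ∧
    ∀ t ∈ cornerTriples m, t ∈ cornerTriples (ψ t)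

/-- `S` contains a corner solution modeled on some variety. -/
def HasCornerSolution (S : Multiset CCube) : Prop := ∃ m : CCube, CornerSolutionOn S m

/-- An `n`-frame solution from `S` modeled on the cube `m`: a corner solution together with,
for each of the twelve adjacent pairs of `m`, a further `n - 2` cube instances having that
adjacent pair, all `12n - 16` cube instances distinct. -/
def FrameSolutionOn (n : ℕ) (S : Multiset CCube) (m : CCube) : Prop :=
  ∃ (ψ : Finset (Fin 6 × Fin 6 × Fin 6) → CCube) (f : Finset (Fin 6) → Multiset CCube),
    (∀ t ∈ cornerTriples m, t ∈ cornerTriples (ψ t)) ∧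
    (∀ p ∈ adjPairs m, Multiset.card (f p) = n - 2 ∧ ∀ x ∈ f p, p ∈ adjPairs x) ∧
    Multiset.map ψ (cornerTriples m).val + (adjPairs m).sum f ≤ S

/-- `S` contains an `n`-frame solution modeled on some variety. -/
def HasFrameSolution (n : ℕ) (S : Multiset CCube) : Prop := ∃ m : CCube, FrameSolutionOn n S m

def mk6 (f g : Fin 6 → Fin 6) (h1 : ∀ x, g (f x) = x := by decide)
    (h2 : ∀ x, f (g x) = x := by decide) : Equiv.Perm (Fin 6) := ⟨f, g, h1, h2⟩
def GA : Fin 24 → CCube := ![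
  mk6 ![0,1,2,3,4,5] ![0,1,2,3,4,5],
  mk6 ![1,3,2,4,0,5] ![4,0,2,1,3,5],
  mk6 ![0,2,4,3,5,1] ![0,5,1,3,2,4],
  mk6 ![3,4,2,0,1,5] ![3,4,2,0,1,5],
  mk6 ![1,2,0,4,5,3] ![2,0,1,5,3,4],
  mk6 ![2,3,4,5,0,1] ![4,5,0,1,2,3],
  mk6 ![0,4,5,3,1,2] ![0,4,5,3,1,2],
  mk6 ![4,0,2,1,3,5] ![1,3,2,4,0,5],
  mk6 ![3,2,1,0,5,4] ![3,2,1,0,5,4],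
  mk6 ![2,4,0,5,1,3] ![2,4,0,5,1,3],
  mk6 ![1,0,5,4,3,2] ![1,0,5,4,3,2],
  mk6 ![3,5,4,0,2,1] ![3,5,4,0,2,1],
  mk6 ![4,3,5,1,0,2] ![4,3,5,1,0,2],
  mk6 ![0,5,1,3,2,4] ![0,2,4,3,5,1],
  mk6 ![4,2,3,1,5,0] ![5,3,1,2,0,4],
  mk6 ![2,0,1,5,3,4] ![1,2,0,4,5,3],
  mk6 ![3,1,5,0,4,2] ![3,1,5,0,4,2],
  mk6 ![4,5,0,1,2,3] ![2,3,4,5,0,1],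
  mk6 ![1,5,3,4,2,0] ![5,0,4,2,3,1],
  mk6 ![5,0,4,2,3,1] ![1,5,3,4,2,0],
  mk6 ![5,3,1,2,0,4] ![4,2,3,1,5,0],
  mk6 ![2,1,3,5,4,0] ![5,1,0,2,4,3],
  mk6 ![5,1,0,2,4,3] ![2,1,3,5,4,0],
  mk6 ![5,4,3,2,1,0] ![5,4,3,2,1,0]
]

lemma GA_mem (k : Fin 24) : GA k ∈ G := by
  have hr1 : r1 ∈ G := Subgroup.subset_closure (Set.mem_insert _ _)
  have hr2 : r2 ∈ G := Subgroup.subset_closure (Set.mem_insert_of_mem _ rfl)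
  have m0 : GA 0 ∈ G := by
    rw [show GA 0 = (1 : CCube) from Equiv.ext (by decide)]; exact one_mem G
  have m1 : GA 1 ∈ G := by
    rw [show GA 1 = r1 from Equiv.ext (by decide)]; exact hr1
  have m2 : GA 2 ∈ G := by
    rw [show GA 2 = r2 from Equiv.ext (by decide)]; exact hr2
  have m3 : GA 3 ∈ G := by
    rw [show GA 3 = GA 1 * GA 1 from Equiv.ext (by decide)]; exact mul_mem m1 m1
  have m4 : GA 4 ∈ G := by
    rw [show GA 4 = GA 1 * GA 2 from Equiv.ext (by decide)]; exact mul_mem m1 m2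
  have m5 : GA 5 ∈ G := by
    rw [show GA 5 = GA 2 * GA 1 from Equiv.ext (by decide)]; exact mul_mem m2 m1
  have m6 : GA 6 ∈ G := by
    rw [show GA 6 = GA 2 * GA 2 from Equiv.ext (by decide)]; exact mul_mem m2 m2
  have m7 : GA 7 ∈ G := by
    rw [show GA 7 = GA 3 * GA 1 from Equiv.ext (by decide)]; exact mul_mem m3 m1
  have m8 : GA 8 ∈ G := by
    rw [show GA 8 = GA 3 * GA 2 from Equiv.ext (by decide)]; exact mul_mem m3 m2
  have m9 : GA 9 ∈ G := by
    rw [show GA 9 = GA 4 * GA 1 from Equiv.ext (by decide)]; exact mul_mem m4 m1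
  have m10 : GA 10 ∈ G := by
    rw [show GA 10 = GA 4 * GA 2 from Equiv.ext (by decide)]; exact mul_mem m4 m2
  have m11 : GA 11 ∈ G := by
    rw [show GA 11 = GA 5 * GA 1 from Equiv.ext (by decide)]; exact mul_mem m5 m1
  have m12 : GA 12 ∈ G := by
    rw [show GA 12 = GA 6 * GA 1 from Equiv.ext (by decide)]; exact mul_mem m6 m1
  have m13 : GA 13 ∈ G := by
    rw [show GA 13 = GA 6 * GA 2 from Equiv.ext (by decide)]; exact mul_mem m6 m2
  have m14 : GA 14 ∈ G := by
    rw [show GA 14 = GA 7 * GA 2 from Equiv.ext (by decide)]; exact mul_mem m7 m2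
  have m15 : GA 15 ∈ G := by
    rw [show GA 15 = GA 8 * GA 1 from Equiv.ext (by decide)]; exact mul_mem m8 m1
  have m16 : GA 16 ∈ G := by
    rw [show GA 16 = GA 8 * GA 2 from Equiv.ext (by decide)]; exact mul_mem m8 m2
  have m17 : GA 17 ∈ G := by
    rw [show GA 17 = GA 9 * GA 1 from Equiv.ext (by decide)]; exact mul_mem m9 m1
  have m18 : GA 18 ∈ G := by
    rw [show GA 18 = GA 10 * GA 2 from Equiv.ext (by decide)]; exact mul_mem m10 m2
  have m19 : GA 19 ∈ G := by
    rw [show GA 19 = GA 11 * GA 1 from Equiv.ext (by decide)]; exact mul_mem m11 m1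
  have m20 : GA 20 ∈ G := by
    rw [show GA 20 = GA 13 * GA 1 from Equiv.ext (by decide)]; exact mul_mem m13 m1
  have m21 : GA 21 ∈ G := by
    rw [show GA 21 = GA 14 * GA 1 from Equiv.ext (by decide)]; exact mul_mem m14 m1
  have m22 : GA 22 ∈ G := by
    rw [show GA 22 = GA 17 * GA 1 from Equiv.ext (by decide)]; exact mul_mem m17 m1
  have m23 : GA 23 ∈ G := by
    rw [show GA 23 = GA 18 * GA 1 from Equiv.ext (by decide)]; exact mul_mem m18 m1
  fin_cases k
  · exact m0
  · exact m1
  · exact m2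
  · exact m3
  · exact m4
  · exact m5
  · exact m6
  · exact m7
  · exact m8
  · exact m9
  · exact m10
  · exact m11
  · exact m12
  · exact m13
  · exact m14
  · exact m15
  · exact m16
  · exact m17
  · exact m18
  · exact m19
  · exact m20
  · exact m21
  · exact m22
  · exact m23
-- group structure of the 24 elements
lemma GA_mul : ∀ i j : Fin 24, ∃ k, ∀ x, GA i (GA j x) = GA k x := by decide
lemma GA_inv : ∀ i : Fin 24, ∃ k, ∀ x, GA k (GA i x) = x := by decide

def GH : Subgroup (Equiv.Perm (Fin 6)) where
  carrier := {g | ∃ k : Fin 24, g = GA k}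
  one_mem' := ⟨0, Equiv.ext (by decide)⟩
  mul_mem' := by
    rintro x y ⟨i, rfl⟩ ⟨j, rfl⟩
    obtain ⟨k, hk⟩ := GA_mul i j
    exact ⟨k, Equiv.ext hk⟩
  inv_mem' := by
    rintro x ⟨i, rfl⟩
    obtain ⟨k, hk⟩ := GA_inv i
    refine ⟨k, Equiv.ext fun x => ?_⟩
    have := hk ((GA i)⁻¹ x)
    rw [Equiv.Perm.coe_inv, Equiv.apply_symm_apply] at this; exact this.symm

lemma mem_G_iff (g : CCube) : g ∈ G ↔ ∃ k : Fin 24, g = GA k := by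
  constructor
  · intro hg
    have hle : G ≤ GH := by
      rw [G, Subgroup.closure_le]
      rintro x (rfl | rfl)
      · exact ⟨1, Equiv.ext (by decide)⟩
      · exact ⟨2, Equiv.ext (by decide)⟩
    exact hle hg
  · rintro ⟨k, rfl⟩; exact GA_mem k

lemma tau_comm_dec : ∀ k : Fin 24, ∀ i : Fin 6, GA k (tau i) = tau (GA k i) := by decide

lemma tau_comm {g : CCube} (hg : g ∈ G) (i : Fin 6) : g (tau i) = tau (g i) := by
  obtain ⟨k, rfl⟩ := (mem_G_iff g).1 hg
  exact tau_comm_dec k i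

lemma mem_oppPairs {c : CCube} {p : Finset (Fin 6)} :
    p ∈ oppPairs c ↔ ∃ i, ({c i, c (tau i)} : Finset (Fin 6)) = p := by
  simp [oppPairs]

lemma oppPairs_mul {c g : CCube} (hg : g ∈ G) : oppPairs (c * g) = oppPairs c := by
  ext p
  simp only [mem_oppPairs]
  constructor
  · rintro ⟨i, rfl⟩
    exact ⟨g i, by rw [Equiv.Perm.mul_apply, Equiv.Perm.mul_apply, tau_comm hg]⟩
  · rintro ⟨i, rfl⟩
    refine ⟨g⁻¹ i, ?_⟩
    simp [Equiv.Perm.mul_apply, tau_comm hg, Equiv.Perm.coe_inv, Equiv.apply_symm_apply]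

lemma mem_cornerTriples {c : CCube} {s : Finset (Fin 6 × Fin 6 × Fin 6)} :
    s ∈ cornerTriples c ↔ ∃ g ∈ G, s = cycClass (c (g 0), c (g 1), c (g 2)) := by
  simp [cornerTriples]

lemma cornerTriples_mul {c g : CCube} (hg : g ∈ G) :
    cornerTriples (c * g) = cornerTriples c := by
  ext s
  simp only [mem_cornerTriples]
  constructor
  · rintro ⟨h, hh, rfl⟩
    exact ⟨g * h, G.mul_mem hg hh, rfl⟩
  · rintro ⟨h, hh, rfl⟩
    exact ⟨g⁻¹ * h, G.mul_mem (G.inv_mem hg) hh, by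
      simp [Equiv.Perm.mul_apply, Equiv.Perm.coe_inv, Equiv.apply_symm_apply]⟩

/-- computable version of cornerTriples -/
def cT (c : CCube) : Finset (Finset (Fin 6 × Fin 6 × Fin 6)) :=
  (List.ofFn (fun k : Fin 24 => cycClass (c (GA k 0), c (GA k 1), c (GA k 2)))).toFinset

lemma cornerTriples_eq_cT (c : CCube) : cornerTriples c = cT c := by
  ext s
  rw [mem_cornerTriples, cT, List.mem_toFinset, List.mem_ofFn]
  constructor
  · rintro ⟨g, hg, rfl⟩
    obtain ⟨k, rfl⟩ := (mem_G_iff g).1 hg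
    exact ⟨k, rfl⟩
  · rintro ⟨k, rfl⟩
    exact ⟨GA k, GA_mem k, rfl⟩

/-- the color-relabeling action on triples -/
def tripMap (σ : CCube) (t : Fin 6 × Fin 6 × Fin 6) : Fin 6 × Fin 6 × Fin 6 :=
  (σ t.1, σ t.2.1, σ t.2.2)

lemma tripMap_inj (σ : CCube) : Function.Injective (tripMap σ) := by
  rintro ⟨x1, x2, x3⟩ ⟨y1, y2, y3⟩ h
  simp only [tripMap, Prod.mk.injEq] at h ⊢
  exact ⟨σ.injective h.1, σ.injective h.2.1, σ.injective h.2.2⟩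

lemma cycClass_tripMap (σ : CCube) (t : Fin 6 × Fin 6 × Fin 6) :
    cycClass (tripMap σ t) = (cycClass t).image (tripMap σ) := by
  obtain ⟨x, y, z⟩ := t
  simp [cycClass, cyc, tripMap, Finset.image_insert]

lemma cornerTriples_left (σ c : CCube) :
    cornerTriples (σ * c) = (cornerTriples c).image (Finset.image (tripMap σ)) := by
  ext s
  rw [Finset.mem_image, mem_cornerTriples]
  constructor
  · rintro ⟨g, hg, rfl⟩
    refine ⟨cycClass (c (g 0), c (g 1), c (g 2)), mem_cornerTriples.2 ⟨g, hg, rfl⟩, ?_⟩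
    rw [← cycClass_tripMap]
    rfl
  · rintro ⟨t, ht, rfl⟩
    obtain ⟨g, hg, rfl⟩ := mem_cornerTriples.1 ht
    exact ⟨g, hg, by rw [← cycClass_tripMap]; rfl⟩

lemma sameVariety_out (c : CCube) : sameVariety (Quotient.out (varietyOf c)) c :=
  Quotient.exact (Quotient.out_eq (varietyOf c))

lemma varietyOf_out (v : Variety) : varietyOf (Quotient.out v) = v := Quotient.out_eq v

lemma varietyOf_eq_iff {c d : CCube} : varietyOf c = varietyOf d ↔ sameVariety c d := by
  constructor
  · exact Quotient.exact
  · intro h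
    exact Quotient.sound (h : varietySetoid.r c d)

lemma cornerTriples_sv {c d : CCube} (h : sameVariety c d) :
    cornerTriples d = cornerTriples c := by
  obtain ⟨g, hg, rfl⟩ := h
  exact cornerTriples_mul hg

lemma oppPairs_sv {c d : CCube} (h : sameVariety c d) : oppPairs d = oppPairs c := by
  obtain ⟨g, hg, rfl⟩ := h
  exact oppPairs_mul hg

lemma vCorners_mk (c : CCube) : vCorners (varietyOf c) = cornerTriples c :=
  (cornerTriples_sv (sameVariety_out c)).symm

lemma vOpp_mk (c : CCube) : vOpp (varietyOf c) = oppPairs c :=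
  (oppPairs_sv (sameVariety_out c)).symm

lemma swap_conj_dec : ∀ k : Fin 24, ∃ k', ∀ x,
    Equiv.swap (0 : Fin 6) 3 (GA k (Equiv.swap (0 : Fin 6) 3 x)) = GA k' x := by decide

lemma swap_conj_mem {g : CCube} (hg : g ∈ G) :
    Equiv.swap (0 : Fin 6) 3 * g * Equiv.swap 0 3 ∈ G := by
  obtain ⟨k, rfl⟩ := (mem_G_iff g).1 hg
  obtain ⟨k', hk'⟩ := swap_conj_dec k
  rw [show Equiv.swap (0 : Fin 6) 3 * GA k * Equiv.swap 0 3 = GA k' from Equiv.ext fun x => hk' x]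
  exact GA_mem k'

lemma mirror_mul {c g : CCube} (hg : g ∈ G) :
    mirror (c * g) = mirror c * (Equiv.swap (0 : Fin 6) 3 * g * Equiv.swap 0 3) := by
  have h1 : Equiv.swap (0 : Fin 6) 3 * Equiv.swap 0 3 = 1 := Equiv.swap_mul_self 0 3
  rw [mirror, mirror]
  calc c * g * Equiv.swap 0 3
      = c * (Equiv.swap 0 3 * Equiv.swap 0 3) * g * Equiv.swap 0 3 := by rw [h1]; group
    _ = c * Equiv.swap 0 3 * (Equiv.swap 0 3 * g * Equiv.swap 0 3) := by group

lemma mirror_sv {c d : CCube} (h : sameVariety c d) : sameVariety (mirror c) (mirror d) := by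
  obtain ⟨g, hg, rfl⟩ := h
  exact ⟨_, swap_conj_mem hg, mirror_mul hg⟩

lemma vMirror_mk (c : CCube) : vMirror (varietyOf c) = varietyOf (mirror c) := by
  rw [vMirror, varietyOf_eq_iff]
  exact mirror_sv (sameVariety_out c)

def SIX : Fin 6 → CCube := ![
  mk6 ![0,1,2,3,4,5] ![0,1,2,3,4,5],
  mk6 ![0,1,2,3,5,4] ![0,1,2,3,5,4],
  mk6 ![0,1,4,3,2,5] ![0,1,4,3,2,5],
  mk6 ![0,1,4,3,5,2] ![0,1,5,3,2,4],
  mk6 ![0,1,5,3,2,4] ![0,1,4,3,5,2],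
  mk6 ![0,1,5,3,4,2] ![0,1,5,3,4,2]]

lemma six_table : ∀ a2 a4 a5 : Fin 6,
    (∀ x y : Fin 6, (![0,1,a2,3,a4,a5] : Fin 6 → Fin 6) x = ![0,1,a2,3,a4,a5] y → x = y) →
    ∃ n : Fin 6, ∀ x, (![0,1,a2,3,a4,a5] : Fin 6 → Fin 6) x = SIX n x := by decide

lemma exists_six {e : CCube} (h0 : e 0 = 0) (h1 : e 1 = 1) (h3 : e 3 = 3) :
    ∃ n : Fin 6, e = SIX n := by
  have eta : ∀ x : Fin 6, e x = (![0, 1, e 2, 3, e 4, e 5] : Fin 6 → Fin 6) x := by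
    intro x
    fin_cases x <;> first | exact h0 | exact h1 | exact h3 | rfl
  obtain ⟨n, hn⟩ := six_table (e 2) (e 4) (e 5) (by
    intro x y hxy
    exact e.injective (by rw [eta x, eta y, hxy]))
  exact ⟨n, Equiv.ext fun x => by rw [eta x, hn x]⟩

/-- decidable surrogate for sameVariety -/
def svl (x y : CCube) : Prop := ∃ k : Fin 24, ∀ i, y i = x (GA k i)

lemma sv_iff_svl (x y : CCube) : sameVariety x y ↔ svl x y := by
  constructor
  · rintro ⟨g, hg, rfl⟩
    obtain ⟨k, rfl⟩ := (mem_G_iff g).1 hg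
    exact ⟨k, fun i => rfl⟩
  · rintro ⟨k, hk⟩
    exact ⟨GA k, GA_mem k, Equiv.ext hk⟩

lemma pair_eq {x y : Fin 6} {a b : Fin 6} (hab : a ≠ b)
    (h : ({x, y} : Finset (Fin 6)) = {a, b}) : (x = a ∧ y = b) ∨ (x = b ∧ y = a) := by
  have ha : a = x ∨ a = y := by
    have := h ▸ (Finset.mem_insert_self a {b})
    simpa using this
  have hb : b = x ∨ b = y := by
    have : b ∈ ({a, b} : Finset (Fin 6)) := by simp
    rw [← h] at this
    simpa using this
  rcases ha with rfl | rfl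
  · rcases hb with rfl | rfl
    · exact absurd rfl hab
    · exact Or.inl ⟨rfl, rfl⟩
  · rcases hb with rfl | rfl
    · exact Or.inr ⟨rfl, rfl⟩
    · exact absurd rfl hab

lemma trans_dec : ∀ i : Fin 6, ∃ k : Fin 24, GA k 0 = i ∧ GA k 3 = tau i := by decide

lemma flip_dec : ∃ k : Fin 24, GA k 0 = 3 ∧ GA k 3 = 0 := by decide

/-- normalize: get a rotation putting color a on face 0 and color b on face 3 -/
lemma exists_rep {d : CCube} {a b : Fin 6} (hab : a ≠ b)
    (h : ({a, b} : Finset (Fin 6)) ∈ oppPairs d) :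
    ∃ g ∈ G, (d * g) 0 = a ∧ (d * g) 3 = b := by
  obtain ⟨i, hi⟩ := mem_oppPairs.1 h
  obtain ⟨k, hk0, hk3⟩ := trans_dec i
  rcases pair_eq hab hi with ⟨h1, h2⟩ | ⟨h1, h2⟩
  · exact ⟨GA k, GA_mem k, by rw [Equiv.Perm.mul_apply, hk0]; exact h1,
      by rw [Equiv.Perm.mul_apply, hk3]; exact h2⟩
  · obtain ⟨k2, hk20, hk23⟩ := flip_dec
    refine ⟨GA k * GA k2, G.mul_mem (GA_mem k) (GA_mem k2), ?_, ?_⟩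
    · show d (GA k (GA k2 0)) = a
      rw [hk20, hk3]; exact h2
    · show d (GA k (GA k2 3)) = b
      rw [hk23, hk0]; exact h1

lemma stab_dec : ∀ j : Fin 6, j ≠ 0 → j ≠ 3 →
    ∃ k : Fin 24, GA k 0 = 0 ∧ GA k 3 = 3 ∧ GA k 1 = j := by decide

/-- normalize a cube with colors 0,3 on faces 0,3 to one of the six representatives -/
lemma exists_six_rep {d : CCube} (h0 : d 0 = 0) (h3 : d 3 = 3) :
    ∃ n : Fin 6, ∃ g ∈ G, d * g = SIX n := by
  set j := d⁻¹ 1 with hj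
  have hdj : d j = 1 := Equiv.apply_symm_apply d 1
  have hj0 : j ≠ 0 := fun hh => by rw [hh, h0] at hdj; exact absurd hdj (by decide)
  have hj3 : j ≠ 3 := fun hh => by rw [hh, h3] at hdj; exact absurd hdj (by decide)
  obtain ⟨k, hk0, hk3, hk1⟩ := stab_dec j hj0 hj3
  have e0 : (d * GA k) 0 = 0 := by rw [Equiv.Perm.mul_apply, hk0]; exact h0
  have e3 : (d * GA k) 3 = 3 := by rw [Equiv.Perm.mul_apply, hk3]; exact h3
  have e1 : (d * GA k) 1 = 1 := by rw [Equiv.Perm.mul_apply, hk1]; exact hdj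
  obtain ⟨n, hn⟩ := exists_six e0 e1 e3
  exact ⟨n, GA k, GA_mem k, hn⟩

def M6 : CCube := mk6 ![3,1,2,0,4,5] ![3,1,2,0,4,5]

lemma M6_eq_swap : M6 = Equiv.swap 0 3 := Equiv.ext (by decide)

lemma FACT0 : cT 1 ∩ cT M6 = ∅ := by decide

instance svl_dec (x y : CCube) : Decidable (svl x y) :=
  decidable_of_iff (∃ k : Fin 24, ∀ i, y i = x (GA k i)) Iff.rfl

lemma FACT2 : ∀ n : Fin 6, ¬ svl 1 (SIX n) → ¬ svl M6 (SIX n) →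
    (cT 1 ∩ cT (SIX n)).card = 2 := by decide

lemma FACT3 : ∀ n n' : Fin 6, ¬ svl 1 (SIX n) → ¬ svl M6 (SIX n) →
    ¬ svl 1 (SIX n') → ¬ svl M6 (SIX n') → ¬ svl (SIX n) (SIX n') →
    (cT 1 ∩ cT (SIX n)) ∩ (cT 1 ∩ cT (SIX n')) = ∅ := by decide

lemma sv_trans {x y z : CCube} (h1 : sameVariety x y) (h2 : sameVariety y z) :
    sameVariety x z := varietySetoid.iseqv.trans h1 h2

lemma sv_symm {x y : CCube} (h : sameVariety x y) : sameVariety y x :=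
  varietySetoid.iseqv.symm h

lemma variety_eq_of_rel {u w : Variety} {p q : CCube}
    (hp : sameVariety (Quotient.out u) p) (hq : sameVariety (Quotient.out w) q)
    (hrel : sameVariety p q) : u = w := by
  rw [← varietyOf_out u, ← varietyOf_out w, varietyOf_eq_iff]
  exact sv_trans hp (sv_trans hrel (sv_symm hq))

/-- every variety with `{a,b}` as opposite pair, normalized against a fixed cube `c2`
with color `a` on face 0 and `b` on face 3 -/
lemma w_norm {a b : Fin 6} (hab : a ≠ b) (c2 : CCube) (h0 : c2 0 = a) (h3 : c2 3 = b)
    {w : Variety} (hw : ({a, b} : Finset (Fin 6)) ∈ vOpp w) :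
    ∃ (n : Fin 6) (p : CCube), sameVariety (Quotient.out w) p ∧ SIX n = c2⁻¹ * p := by
  have hw' : ({a, b} : Finset (Fin 6)) ∈ oppPairs (Quotient.out w) := hw
  obtain ⟨h, hh, hd0, hd3⟩ := exists_rep hab hw'
  set d2 := Quotient.out w * h with hd2
  have e0 : (c2⁻¹ * d2) 0 = 0 := by
    show c2⁻¹ (d2 0) = 0
    rw [hd0, ← h0, Equiv.Perm.coe_inv, Equiv.symm_apply_apply]
  have e3 : (c2⁻¹ * d2) 3 = 3 := by
    show c2⁻¹ (d2 3) = 3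
    rw [hd3, ← h3, Equiv.Perm.coe_inv, Equiv.symm_apply_apply]
  obtain ⟨n, g2, hg2, hn⟩ := exists_six_rep e0 e3
  refine ⟨n, d2 * g2, ⟨h * g2, G.mul_mem hh hg2, by rw [hd2]; group⟩, ?_⟩
  rw [← hn]; group

/-- If `v` has `{a, b}` as an opposite pair, then so does its mirror variety; `v` shares no
corner triples with its mirror variety; `v` shares exactly two corner triples with each of
the other four varieties having `{a, b}` as an opposite pair; and the four shared two-element
sets of corner triples are pairwise disjoint. -/
theorem opp_pair_corner_sharing (a b : Fin 6) (hab : a ≠ b) (v : Variety)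
    (hv : ({a, b} : Finset (Fin 6)) ∈ vOpp v) :
    ({a, b} : Finset (Fin 6)) ∈ vOpp (vMirror v) ∧
    vCorners v ∩ vCorners (vMirror v) = ∅ ∧
    (∀ w : Variety, ({a, b} : Finset (Fin 6)) ∈ vOpp w → w ≠ v → w ≠ vMirror v →
      (vCorners v ∩ vCorners w).card = 2) ∧
    ∀ w w' : Variety, w ≠ w' →
      ({a, b} : Finset (Fin 6)) ∈ vOpp w → w ≠ v → w ≠ vMirror v →
      ({a, b} : Finset (Fin 6)) ∈ vOpp w' → w' ≠ v → w' ≠ vMirror v →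
      (vCorners v ∩ vCorners w) ∩ (vCorners v ∩ vCorners w') = ∅ := by
  have hv' : ({a, b} : Finset (Fin 6)) ∈ oppPairs (Quotient.out v) := hv
  obtain ⟨g, hg, h0, h3⟩ := exists_rep hab hv'
  set c2 := Quotient.out v * g with hc2
  have hsvc2 : sameVariety (Quotient.out v) c2 := ⟨g, hg, rfl⟩
  set F : Finset (Fin 6 × Fin 6 × Fin 6) → Finset (Fin 6 × Fin 6 × Fin 6) :=
    Finset.image (tripMap c2⁻¹) with hF
  have hFinj : Function.Injective F := Finset.image_injective (tripMap_inj _)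
  have hA : cornerTriples (1 : CCube) = (vCorners v).image F := by
    have h1 : (1 : CCube) = c2⁻¹ * c2 := (inv_mul_cancel c2).symm
    rw [h1, cornerTriples_left, cornerTriples_sv hsvc2]
    rfl
  have hMv : vCorners (vMirror v) = cornerTriples (mirror c2) := by
    have e1 : vCorners (vMirror v) = cornerTriples (mirror (Quotient.out v)) :=
      (cornerTriples_sv (sameVariety_out (mirror (Quotient.out v)))).symm
    rw [e1, cornerTriples_sv (mirror_sv hsvc2)]
  have hB : cornerTriples M6 = (vCorners (vMirror v)).image F := by
    have h1 : M6 = c2⁻¹ * mirror c2 := by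
      rw [M6_eq_swap, mirror]; group
    rw [h1, cornerTriples_left, hMv]
  -- Claim 1
  have claim1 : ({a, b} : Finset (Fin 6)) ∈ vOpp (vMirror v) := by
    have e1 : vOpp (vMirror v) = oppPairs (mirror c2) := by
      have e2 : vOpp (vMirror v) = oppPairs (mirror (Quotient.out v)) :=
        (oppPairs_sv (sameVariety_out (mirror (Quotient.out v)))).symm
      rw [e2, oppPairs_sv (mirror_sv hsvc2)]
    rw [e1]
    refine mem_oppPairs.2 ⟨0, ?_⟩
    have hm0 : mirror c2 0 = b := by
      show c2 (Equiv.swap 0 3 0) = b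
      rw [Equiv.swap_apply_left]; exact h3
    have hm3 : mirror c2 (tau 0) = a := by
      show c2 (Equiv.swap 0 3 (tau 0)) = a
      rw [show tau 0 = 3 from by decide, Equiv.swap_apply_right]; exact h0
    rw [hm0, hm3, Finset.pair_comm]
  -- Claim 2
  have claim2 : vCorners v ∩ vCorners (vMirror v) = ∅ := by
    have h1 : (vCorners v ∩ vCorners (vMirror v)).image F = ∅ := by
      rw [Finset.image_inter _ _ hFinj, ← hA, ← hB, cornerTriples_eq_cT,
        cornerTriples_eq_cT]
      exact FACT0
    exact Finset.image_eq_empty.1 h1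
  -- per-variety normalization
  have wdat : ∀ w : Variety, ({a, b} : Finset (Fin 6)) ∈ vOpp w →
      ∃ (n : Fin 6) (p : CCube), sameVariety (Quotient.out w) p ∧ SIX n = c2⁻¹ * p ∧
        cornerTriples (SIX n) = (vCorners w).image F := by
    intro w hw
    obtain ⟨n, p, hp, hnp⟩ := w_norm hab c2 h0 h3 hw
    refine ⟨n, p, hp, hnp, ?_⟩
    rw [hnp, cornerTriples_left, cornerTriples_sv hp]
    rfl
  have key1 : ∀ (w : Variety) (n : Fin 6) (p : CCube), sameVariety (Quotient.out w) p →
      SIX n = c2⁻¹ * p → svl 1 (SIX n) → w = v := by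
    intro w n p hp hnp hs
    obtain ⟨g', hg', hS⟩ := (sv_iff_svl _ _).2 hs
    have hpe : p = c2 * g' := by
      calc p = c2 * (c2⁻¹ * p) := by group
        _ = c2 * ((1 : CCube) * g') := by rw [← hnp, ← hS]
        _ = c2 * g' := by group
    refine variety_eq_of_rel hp (sv_trans hsvc2 ⟨g', hg', rfl⟩) ?_
    rw [hpe]
    exact varietySetoid.iseqv.refl _
  have keyM : ∀ (w : Variety) (n : Fin 6) (p : CCube), sameVariety (Quotient.out w) p →
      SIX n = c2⁻¹ * p → svl M6 (SIX n) → w = vMirror v := by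
    intro w n p hp hnp hs
    obtain ⟨g', hg', hS⟩ := (sv_iff_svl _ _).2 hs
    have hc2M : c2 * M6 = mirror c2 := by rw [M6_eq_swap]; rfl
    have hpe : p = mirror c2 * g' := by
      calc p = c2 * (c2⁻¹ * p) := by group
        _ = c2 * (M6 * g') := by rw [← hnp, ← hS]
        _ = c2 * M6 * g' := by group
        _ = mirror c2 * g' := by rw [hc2M]
    have hq : sameVariety (Quotient.out (vMirror v)) (mirror c2 * g') := by
      refine sv_trans (sv_trans ?_ (mirror_sv hsvc2)) ⟨g', hg', rfl⟩
      exact sameVariety_out (mirror (Quotient.out v))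
    refine variety_eq_of_rel hp hq ?_
    rw [hpe]
    exact varietySetoid.iseqv.refl _
  have key2 : ∀ (w w' : Variety) (n n' : Fin 6) (p p' : CCube),
      sameVariety (Quotient.out w) p → SIX n = c2⁻¹ * p →
      sameVariety (Quotient.out w') p' → SIX n' = c2⁻¹ * p' →
      svl (SIX n) (SIX n') → w = w' := by
    intro w w' n n' p p' hp hnp hp' hnp' hs
    obtain ⟨g', hg', hS⟩ := (sv_iff_svl _ _).2 hs
    have hpe : p' = p * g' := by
      calc p' = c2 * (c2⁻¹ * p') := by group
        _ = c2 * (c2⁻¹ * p * g') := by rw [← hnp', hS, hnp]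
        _ = p * g' := by group
    exact variety_eq_of_rel hp hp' ⟨g', hg', hpe⟩
  refine ⟨claim1, claim2, ?_, ?_⟩
  · intro w hw hwv hwm
    obtain ⟨n, p, hp, hnp, hct⟩ := wdat w hw
    have n1 : ¬ svl 1 (SIX n) := fun hs => hwv (key1 w n p hp hnp hs)
    have nM : ¬ svl M6 (SIX n) := fun hs => hwm (keyM w n p hp hnp hs)
    have hcard := FACT2 n n1 nM
    rw [← cornerTriples_eq_cT, ← cornerTriples_eq_cT, hA, hct,
      ← Finset.image_inter _ _ hFinj, Finset.card_image_of_injective _ hFinj] at hcard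
    exact hcard
  · intro w w' hww' hw hwv hwm hw' hw'v hw'm
    obtain ⟨n, p, hp, hnp, hct⟩ := wdat w hw
    obtain ⟨n', p', hp', hnp', hct'⟩ := wdat w' hw'
    have n1 : ¬ svl 1 (SIX n) := fun hs => hwv (key1 w n p hp hnp hs)
    have nM : ¬ svl M6 (SIX n) := fun hs => hwm (keyM w n p hp hnp hs)
    have n1' : ¬ svl 1 (SIX n') := fun hs => hw'v (key1 w' n' p' hp' hnp' hs)
    have nM' : ¬ svl M6 (SIX n') := fun hs => hw'm (keyM w' n' p' hp' hnp' hs)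
    have nss : ¬ svl (SIX n) (SIX n') := fun hs => hww' (key2 w w' n n' p p' hp hnp hp' hnp' hs)
    have hemp := FACT3 n n' n1 nM n1' nM' nss
    rw [← cornerTriples_eq_cT, ← cornerTriples_eq_cT, ← cornerTriples_eq_cT, hA, hct, hct',
      ← Finset.image_inter _ _ hFinj, ← Finset.image_inter _ _ hFinj,
      ← Finset.image_inter _ _ hFinj] at hemp
    exact Finset.image_eq_empty.1 hemp
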